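/- arXiv:2301.02863 — 9 statements merged into one kernel-verified Lean document; each statement's English description precedes it below -/
import Mathlib

section
/- Let f : ℝ^n → ℝ be differentiable with gradient ∇f Lipschitz continuous with constant L > 0 on ℝ^n. Let x, d ∈ ℝ^n, α > 0, and σ ∈ (0,1). If ∇f(x)ᵀd < 0 and the curvature condition ∇f(x + α d)ᵀd ≥ σ ∇f(x)ᵀd holds, then α ≥ ((1 − σ)/L) · (−∇f(x)ᵀd)/‖d‖². -/
open scoped RealInnerProductSpace

/-- Step size lower bound (Lemma 5): any step size accepted by the Wolfe-type curvature
condition along a descent direction is bounded below. -/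
theorem stmt1 {n : ℕ} (f : EuclideanSpace ℝ (Fin n) → ℝ)
    (hf : Differentiable ℝ f) (L : ℝ) (hL : 0 < L)
    (hLip : ∀ a b, ‖gradient f a - gradient f b‖ ≤ L * ‖a - b‖)
    (x d : EuclideanSpace ℝ (Fin n)) (α σ : ℝ) (hα : 0 < α)
    (hσ : σ ∈ Set.Ioo (0 : ℝ) 1)
    (hdesc : ⟪gradient f x, d⟫ < 0)
    (hcurv : ⟪gradient f (x + α • d), d⟫ ≥ σ * ⟪gradient f x, d⟫) :
    α ≥ ((1 - σ) / L) * (-⟪gradient f x, d⟫) / ‖d‖ ^ 2 := by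
  obtain ⟨hσ0, hσ1⟩ := hσ
  have hd : d ≠ 0 := by
    rintro rfl
    simp at hdesc
  have hdn : (0:ℝ) < ‖d‖ ^ 2 := pow_pos (norm_pos_iff.mpr hd) 2
  have h1 : (1 - σ) * (-⟪gradient f x, d⟫) ≤ L * α * ‖d‖ ^ 2 := by
    have key : ⟪gradient f (x + α • d) - gradient f x, d⟫ ≤ L * α * ‖d‖ ^ 2 := by
      calc ⟪gradient f (x + α • d) - gradient f x, d⟫
          ≤ ‖gradient f (x + α • d) - gradient f x‖ * ‖d‖ := real_inner_le_norm _ _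
        _ ≤ (L * ‖(x + α • d) - x‖) * ‖d‖ := by
            gcongr; exact hLip _ _
        _ = L * α * ‖d‖ ^ 2 := by
            have : ‖(x + α • d) - x‖ = α * ‖d‖ := by
              simp [norm_smul, abs_of_pos hα]
            rw [this]; ring
    have expand : ⟪gradient f (x + α • d) - gradient f x, d⟫
        = ⟪gradient f (x + α • d), d⟫ - ⟪gradient f x, d⟫ := by
      rw [inner_sub_left]
    nlinarith [hcurv]
  rw [ge_iff_le, div_le_iff₀ hdn, div_mul_eq_mul_div, div_le_iff₀ hL]
  nlinarith
end

section
/- Let C, f⁺, t ∈ ℝ with t < 0, let η ∈ [0,1] and Q > 0, and set Q⁺ = ηQ + 1 and C⁺ = (ηQ·C + f⁺)/Q⁺. If f⁺ ≤ C + Q⁺·t, then f⁺ < C, C⁺ ≤ C + t < C, and f⁺ ≤ C⁺. -/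
/-- Inductive step of Lemma 6 for the generalized nonmonotone line search. -/
theorem stmt2 (C fplus t η Q Qplus Cplus : ℝ) (ht : t < 0)
    (hη : η ∈ Set.Icc (0 : ℝ) 1) (hQ : 0 < Q)
    (hQplus : Qplus = η * Q + 1)
    (hCplus : Cplus = (η * Q * C + fplus) / Qplus)
    (h : fplus ≤ C + Qplus * t) :
    fplus < C ∧ Cplus ≤ C + t ∧ C + t < C ∧ fplus ≤ Cplus := by
  obtain ⟨h0, h1⟩ := hη
  have hQp : 0 < Qplus := by nlinarith
  have hf : fplus < C := by nlinarith
  refine ⟨hf, ?_, by linarith, ?_⟩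
  · rw [hCplus, div_le_iff₀ hQp]; subst hQplus; nlinarith
  · rw [hCplus, le_div_iff₀ hQp]; subst hQplus
    nlinarith [mul_nonneg (mul_nonneg h0 hQ.le) (sub_nonneg.mpr hf.le)]
end

section
/- Let s, y ∈ ℝ^m with s ≠ 0, let υ > 0, c > 0, μ_max > 0, and 0 < μ ≤ μ_max. Assume sᵀy ≥ υ‖s‖² and ‖y‖ ≤ c‖s‖. Define the regularized difference vector y(μ) = y + μ s. Then ‖y(μ)‖²/(sᵀy(μ)) ≤ c²/υ + 2 μ_max. -/
open scoped RealInnerProductSpace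

/-- Key estimate in Lemma 1: the curvature ratio of the regularized pair
`(s, y(μ))`, `y(μ) = y + μ s`, is bounded by `c²/υ + 2 μ_max`. -/
theorem stmt5 {m : ℕ} (s y : EuclideanSpace ℝ (Fin m)) (hs : s ≠ 0)
    (υ c μmax μ : ℝ) (hυ : 0 < υ) (hc : 0 < c) (hμmax : 0 < μmax)
    (hμ : 0 < μ) (hμ' : μ ≤ μmax)
    (hcurv : ⟪s, y⟫ ≥ υ * ‖s‖ ^ 2) (hLip : ‖y‖ ≤ c * ‖s‖) :
    ‖y + μ • s‖ ^ 2 / ⟪s, y + μ • s⟫ ≤ c ^ 2 / υ + 2 * μmax := by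
  have hsn : (0:ℝ) < ‖s‖ := norm_pos_iff.mpr hs
  have hsy : ⟪s, y⟫ ≥ υ * ‖s‖ ^ 2 := hcurv
  have hexp : ⟪s, y + μ • s⟫ = ⟪s, y⟫ + μ * ‖s‖ ^ 2 := by
    rw [inner_add_right, real_inner_smul_right, real_inner_self_eq_norm_sq]
  have hD : (0:ℝ) < ⟪s, y + μ • s⟫ := by
    rw [hexp]
    nlinarith [mul_pos hυ (pow_pos hsn 2), mul_pos hμ (pow_pos hsn 2)]
  have hnorm : ‖y + μ • s‖ ^ 2 = ‖y‖ ^ 2 + 2 * (μ * ⟪s, y⟫) + μ ^ 2 * ‖s‖ ^ 2 := by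
    rw [norm_add_sq_real, real_inner_smul_right, norm_smul, real_inner_comm]
    simp [mul_pow, abs_of_pos hμ]
    try ring
  rw [div_le_iff₀ hD, hexp, hnorm]
  have hy2 : ‖y‖ ^ 2 ≤ c ^ 2 * ‖s‖ ^ 2 := by nlinarith [norm_nonneg y]
  have h1 : c ^ 2 * ‖s‖ ^ 2 ≤ (c ^ 2 / υ) * ⟪s, y⟫ := by
    rw [div_mul_eq_mul_div, le_div_iff₀ hυ]; nlinarith
  have hsy0 : (0:ℝ) < ⟪s, y⟫ := lt_of_lt_of_le (mul_pos hυ (pow_pos hsn 2)) hsy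
  have h2 : μ * ⟪s, y⟫ ≤ μmax * ⟪s, y⟫ := by nlinarith
  have h3 : μ ^ 2 * ‖s‖ ^ 2 ≤ 2 * μmax * (μ * ‖s‖ ^ 2) := by nlinarith [mul_nonneg (sub_nonneg.mpr hμ') (mul_pos hμ (pow_pos hsn 2)).le, mul_pos hμmax (mul_pos hμ (pow_pos hsn 2))]
  have h4 : 0 ≤ (c ^ 2 / υ) * (μ * ‖s‖ ^ 2) := by positivity
  nlinarith
end

section
/- Let υ > 0, c > 0, μ_max > 0, and let l be a positive integer. Let s_0, …, s_{l−1}, y_0, …, y_{l−1} ∈ ℝ^m and μ_0, …, μ_{l−1} ∈ (0, μ_max] satisfy, for each j, s_j ≠ 0, s_jᵀy_j ≥ υ‖s_j‖², and ‖y_j‖ ≤ c‖s_j‖. Define B_0 = I and, for 0 ≤ j ≤ l−1, B_{j+1} = B_j − (B_j s_j s_jᵀ B_j)/(s_jᵀ B_j s_j) + (y_j(μ_j) y_j(μ_j)ᵀ)/(s_jᵀ y_j(μ_j)), where y_j(μ_j) = y_j + μ_j s_j. Then each B_j is symmetric positive definite and λ_max(B_j) ≤ 1 + j·(c²/υ +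 2μ_max) for all 0 ≤ j ≤ l; in particular λ_max(B_l) ≤ 1 + l·(c²/υ + 2μ_max). -/
open Matrix
open scoped RealInnerProductSpace

/-- The maximum eigenvalue of a (symmetric) real matrix. -/
noncomputable def lamMax {m : ℕ} (A : Matrix (Fin m) (Fin m) ℝ) : ℝ :=
  sSup {r : ℝ | ∃ v : Fin m → ℝ, v ≠ 0 ∧ A.mulVec v = r • v}

/- Auxiliary lemmas -/

private lemma dp_self_pos {m : ℕ} {v : Fin m → ℝ} (h : v ≠ 0) : 0 < v ⬝ᵥ v := by
  have := dotProduct_self_star_pos_iff (v := v) |>.mpr h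
  simpa using this

private lemma quad_vmv {m : ℕ} (u w x : Fin m → ℝ) :
    x ⬝ᵥ (vecMulVec u w) *ᵥ x = (x ⬝ᵥ u) * (w ⬝ᵥ x) := by
  simp only [vecMulVec_apply, mulVec, dotProduct, Finset.mul_sum, Finset.sum_mul, mul_assoc]
  exact Finset.sum_comm

private lemma dp_cs {m : ℕ} (u v : Fin m → ℝ) : (u ⬝ᵥ v) ^ 2 ≤ (u ⬝ᵥ u) * (v ⬝ᵥ v) := by
  have h := real_inner_mul_inner_self_le (WithLp.toLp 2 u : EuclideanSpace ℝ (Fin m))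
    (WithLp.toLp 2 v : EuclideanSpace ℝ (Fin m))
  simp only [PiLp.inner_apply, RCLike.inner_apply, conj_trivial] at h
  simpa [dotProduct, sq, mul_comm] using h

private lemma inner_eq_dp {m : ℕ} (x y : EuclideanSpace ℝ (Fin m)) :
    ⟪x, y⟫ = ((x : Fin m → ℝ) ⬝ᵥ (y : Fin m → ℝ)) := by
  simp [PiLp.inner_apply, RCLike.inner_apply, dotProduct, mul_comm]

private lemma norm_sq_eq_dp {m : ℕ} (x : EuclideanSpace ℝ (Fin m)) :
    ‖x‖ ^ 2 = ((x : Fin m → ℝ) ⬝ᵥ (x : Fin m → ℝ)) := by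
  rw [← real_inner_self_eq_norm_sq]
  exact inner_eq_dp x x

private lemma vecMul_eq_mulVec_of_herm {m : ℕ} {A : Matrix (Fin m) (Fin m) ℝ}
    (h : A.IsHermitian) (v : Fin m → ℝ) : v ᵥ* A = A *ᵥ v := by
  rw [← mulVec_transpose, ← conjTranspose_eq_transpose_of_trivial, h.eq]

private lemma herm_symm_dp {m : ℕ} {A : Matrix (Fin m) (Fin m) ℝ}
    (h : A.IsHermitian) (u v : Fin m → ℝ) : u ⬝ᵥ A *ᵥ v = v ⬝ᵥ A *ᵥ u := by
  rw [dotProduct_mulVec, vecMul_eq_mulVec_of_herm h, dotProduct_comm]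

private lemma quad_expand {m : ℕ} (Bn : Matrix (Fin m) (Fin m) ℝ) (u w z : Fin m → ℝ)
    (a b : ℝ) (v : Fin m → ℝ) :
    v ⬝ᵥ (Bn - a • vecMulVec u w + b • vecMulVec z z) *ᵥ v
      = v ⬝ᵥ Bn *ᵥ v - a * ((v ⬝ᵥ u) * (w ⬝ᵥ v)) + b * ((v ⬝ᵥ z) * (z ⬝ᵥ v)) := by
  simp only [add_mulVec, sub_mulVec, smul_mulVec, dotProduct_add, dotProduct_sub,
    dotProduct_smul, smul_eq_mul, quad_vmv]

private lemma quad_sub {m : ℕ} {Bn : Matrix (Fin m) (Fin m) ℝ} (h : Bn.IsHermitian)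
    (v S : Fin m → ℝ) (t : ℝ) :
    (v - t • S) ⬝ᵥ Bn *ᵥ (v - t • S)
      = v ⬝ᵥ Bn *ᵥ v - 2 * t * (S ⬝ᵥ Bn *ᵥ v) + t ^ 2 * (S ⬝ᵥ Bn *ᵥ S) := by
  have hsym : v ⬝ᵥ Bn *ᵥ S = S ⬝ᵥ Bn *ᵥ v := herm_symm_dp h v S
  simp only [sub_dotProduct, smul_dotProduct, mulVec_sub, mulVec_smul, dotProduct_sub,
    dotProduct_smul, smul_eq_mul, hsym]
  ring

private lemma posdef_quad {m : ℕ} {A : Matrix (Fin m) (Fin m) ℝ} (h : A.PosDef)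
    {v : Fin m → ℝ} (hv : v ≠ 0) : 0 < v ⬝ᵥ A *ᵥ v := by
  have := h.dotProduct_mulVec_pos hv
  simpa using this

private lemma posdef_quad_nonneg {m : ℕ} {A : Matrix (Fin m) (Fin m) ℝ} (h : A.PosDef)
    (v : Fin m → ℝ) : 0 ≤ v ⬝ᵥ A *ᵥ v := by
  rcases eq_or_ne v 0 with rfl | hv
  · simp
  · exact le_of_lt (posdef_quad h hv)

/-- First conclusion of Lemma 1: starting from the identity, `l` regularized BFGS
updates with pairs `(s_j, y_j + μ_j s_j)` satisfying the modified curvature condition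
and the Lipschitz bound yield symmetric positive definite matrices whose maximal
eigenvalues are uniformly bounded. -/
theorem stmt6 {m : ℕ} (υ c μmax : ℝ) (hυ : 0 < υ) (hc : 0 < c)
    (hμmax : 0 < μmax) (l : ℕ) (hl : 0 < l)
    (s y : ℕ → EuclideanSpace ℝ (Fin m)) (μ : ℕ → ℝ)
    (hμ : ∀ j < l, 0 < μ j ∧ μ j ≤ μmax)
    (hs : ∀ j < l, s j ≠ 0)
    (hcurv : ∀ j < l, ⟪s j, y j⟫ ≥ υ * ‖s j‖ ^ 2)
    (hLip : ∀ j < l, ‖y j‖ ≤ c * ‖s j‖)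
    (B : ℕ → Matrix (Fin m) (Fin m) ℝ)
    (hB0 : B 0 = 1)
    (hBrec : ∀ j < l, B (j + 1) = B j
      - (1 / ((s j : Fin m → ℝ) ⬝ᵥ (B j) *ᵥ (s j : Fin m → ℝ))) •
          vecMulVec ((B j) *ᵥ (s j : Fin m → ℝ)) ((s j : Fin m → ℝ) ᵥ* (B j))
      + (1 / ((s j : Fin m → ℝ) ⬝ᵥ ((y j : Fin m → ℝ) + μ j • (s j : Fin m → ℝ)))) •
          vecMulVec ((y j : Fin m → ℝ) + μ j • (s j : Fin m → ℝ))
            ((y j : Fin m → ℝ) + μ j • (s j : Fin m → ℝ))) :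
    ∀ j ≤ l, (B j).PosDef ∧ lamMax (B j) ≤ 1 + j * (c ^ 2 / υ + 2 * μmax) := by
  set κ : ℝ := c ^ 2 / υ + 2 * μmax with hκdef
  have hκ : 0 < κ := by rw [hκdef]; positivity
  -- Key induction: positive definiteness together with a quadratic form bound.
  have key : ∀ j, j ≤ l → (B j).PosDef ∧
      ∀ v : Fin m → ℝ, v ⬝ᵥ (B j) *ᵥ v ≤ (1 + (j : ℝ) * κ) * (v ⬝ᵥ v) := by
    intro j
    induction j with
    | zero =>
      intro _
      constructor
      · rw [hB0]; exact Matrix.PosDef.one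
      · intro v
        rw [hB0]
        simp only [one_mulVec, Nat.cast_zero, zero_mul, add_zero, one_mul]
        exact le_refl _
    | succ n ih =>
      intro hn1
      have hn : n < l := hn1
      obtain ⟨hpd, hquad⟩ := ih (le_of_lt hn)
      have hherm : (B n).IsHermitian := hpd.1
      set S : Fin m → ℝ := (s n : Fin m → ℝ) with hSdef
      set Y : Fin m → ℝ := (y n : Fin m → ℝ) with hYdef
      set Z : Fin m → ℝ := Y + μ n • S with hZdef
      have hSne : S ≠ 0 := (WithLp.ofLp_eq_zero 2).ne.2 (hs n hn)
      have hSS : 0 < S ⬝ᵥ S := dp_self_pos hSne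
      have hμn : 0 < μ n := (hμ n hn).1
      have hμn' : μ n ≤ μmax := (hμ n hn).2
      have hSY : υ * (S ⬝ᵥ S) ≤ S ⬝ᵥ Y := by
        have h1 := hcurv n hn
        rw [inner_eq_dp, norm_sq_eq_dp] at h1
        exact h1
      have hYY : Y ⬝ᵥ Y ≤ c ^ 2 * (S ⬝ᵥ S) := by
        have h1 := hLip n hn
        have h2 : ‖y n‖ ^ 2 ≤ (c * ‖s n‖) ^ 2 := by
          apply pow_le_pow_left₀ (norm_nonneg _) h1
        rw [norm_sq_eq_dp, mul_pow, norm_sq_eq_dp] at h2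
        exact h2
      -- σ = S ⬝ᵥ Z
      have hSZ : S ⬝ᵥ Z = S ⬝ᵥ Y + μ n * (S ⬝ᵥ S) := by
        rw [hZdef, dotProduct_add, dotProduct_smul, smul_eq_mul]
      have hσ_pos : 0 < S ⬝ᵥ Z := by
        rw [hSZ]; nlinarith
      have hσ_lb : υ * (S ⬝ᵥ S) ≤ S ⬝ᵥ Z := by
        rw [hSZ]; nlinarith
      -- Z ⬝ᵥ Z ≤ κ * (S ⬝ᵥ Z)
      have hZZ : Z ⬝ᵥ Z ≤ κ * (S ⬝ᵥ Z) := by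
        have hZZ' : Z ⬝ᵥ Z = Y ⬝ᵥ Y + 2 * μ n * (S ⬝ᵥ Y) + μ n ^ 2 * (S ⬝ᵥ S) := by
          rw [hZdef]
          simp only [dotProduct_add, add_dotProduct, dotProduct_smul, smul_dotProduct,
            smul_eq_mul]
          rw [dotProduct_comm Y S]
          ring
        have hY_term : Y ⬝ᵥ Y ≤ (c ^ 2 / υ) * (S ⬝ᵥ Z) := by
          have h2 : c ^ 2 * (S ⬝ᵥ S) = (c ^ 2 / υ) * (υ * (S ⬝ᵥ S)) := by
            field_simp
          have h3 : (c ^ 2 / υ) * (υ * (S ⬝ᵥ S)) ≤ (c ^ 2 / υ) * (S ⬝ᵥ Z) := by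
            apply mul_le_mul_of_nonneg_left hσ_lb
            positivity
          linarith
        have hμ_term : 2 * μ n * (S ⬝ᵥ Y) + μ n ^ 2 * (S ⬝ᵥ S) ≤ 2 * μmax * (S ⬝ᵥ Z) := by
          have h4 : 2 * μ n * (S ⬝ᵥ Y) + μ n ^ 2 * (S ⬝ᵥ S) ≤ 2 * μ n * (S ⬝ᵥ Z) := by
            rw [hSZ]; nlinarith
          have h5 : 2 * μ n * (S ⬝ᵥ Z) ≤ 2 * μmax * (S ⬝ᵥ Z) := by
            nlinarith
          linarith
        rw [hZZ', hκdef]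
        nlinarith [hY_term, hμ_term]
      -- constants
      set r : ℝ := S ⬝ᵥ (B n) *ᵥ S with hrdef
      have hr : 0 < r := posdef_quad hpd hSne
      -- rewrite the recurrence using symmetry
      have hrec : B (n + 1) = B n - (1 / r) • vecMulVec ((B n) *ᵥ S) ((B n) *ᵥ S)
          + (1 / (S ⬝ᵥ Z)) • vecMulVec Z Z := by
        rw [hBrec n hn, vecMul_eq_mulVec_of_herm hherm]
      -- quadratic form of B (n+1)
      have hq : ∀ v : Fin m → ℝ, v ⬝ᵥ (B (n + 1)) *ᵥ v
          = v ⬝ᵥ (B n) *ᵥ v - (1 / r) * (S ⬝ᵥ (B n) *ᵥ v) ^ 2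
            + (1 / (S ⬝ᵥ Z)) * (Z ⬝ᵥ v) ^ 2 := by
        intro v
        rw [hrec, quad_expand]
        have h1 : v ⬝ᵥ ((B n) *ᵥ S) = S ⬝ᵥ (B n) *ᵥ v := herm_symm_dp hherm v S
        have h2 : ((B n) *ᵥ S) ⬝ᵥ v = S ⬝ᵥ (B n) *ᵥ v := by
          rw [dotProduct_comm]; exact h1
        have h3 : v ⬝ᵥ Z = Z ⬝ᵥ v := dotProduct_comm v Z
        rw [h1, h2, h3]
        ring
      -- Cauchy–Schwarz residual identity
      have hcs : ∀ v : Fin m → ℝ,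
          v ⬝ᵥ (B n) *ᵥ v - (1 / r) * (S ⬝ᵥ (B n) *ᵥ v) ^ 2
            = (v - ((S ⬝ᵥ (B n) *ᵥ v) / r) • S) ⬝ᵥ (B n) *ᵥ (v - ((S ⬝ᵥ (B n) *ᵥ v) / r) • S) := by
        intro v
        rw [quad_sub hherm]
        rw [← hrdef]
        field_simp
        ring
      clear_value S Y Z r κ
      -- Hermitian of B (n+1)
      have hherm' : (B (n + 1)).IsHermitian := by
        rw [hrec]
        apply Matrix.IsHermitian.add
        · apply Matrix.IsHermitian.sub hherm
          show _ = _
          ext i j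
          simp only [conjTranspose_apply, Matrix.smul_apply, vecMulVec_apply, star_trivial,
            smul_eq_mul]
          ring
        · show _ = _
          ext i j
          simp only [conjTranspose_apply, Matrix.smul_apply, vecMulVec_apply, star_trivial,
            smul_eq_mul]
          ring
      -- PosDef of B (n+1)
      have hpd' : (B (n + 1)).PosDef := by
        refine Matrix.PosDef.of_dotProduct_mulVec_pos hherm' (fun v hv => ?_)
        have hv' : (v : Fin m → ℝ) ≠ 0 := hv
        show (0 : ℝ) < _
        have hgoal : 0 < v ⬝ᵥ (B (n + 1)) *ᵥ v := by
          rw [hq v, hcs v]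
          set t : ℝ := (S ⬝ᵥ (B n) *ᵥ v) / r with htdef
          by_cases hw : v - t • S = 0
          · have hveq : v = t • S := by
              rw [sub_eq_zero] at hw; exact hw
            have ht : t ≠ 0 := by
              intro h0
              rw [h0, zero_smul] at hveq
              exact hv' hveq
            have hZv : Z ⬝ᵥ v = t * (Z ⬝ᵥ S) := by
              rw [hveq, dotProduct_smul, smul_eq_mul]
            have hZS : Z ⬝ᵥ S = S ⬝ᵥ Z := dotProduct_comm Z S
            rw [hw]
            simp only [zero_dotProduct]
            rw [hZv, hZS]
            have h6 : 0 < (1 / (S ⬝ᵥ Z)) * (t * (S ⬝ᵥ Z)) ^ 2 := by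
              have hne : t * (S ⬝ᵥ Z) ≠ 0 := mul_ne_zero ht (ne_of_gt hσ_pos)
              exact mul_pos (one_div_pos.mpr hσ_pos)
                (lt_of_le_of_ne (sq_nonneg _) (Ne.symm (pow_ne_zero 2 hne)))
            linarith
          · have h7 : 0 < (v - t • S) ⬝ᵥ (B n) *ᵥ (v - t • S) := posdef_quad hpd hw
            have h8 : 0 ≤ (1 / (S ⬝ᵥ Z)) * (Z ⬝ᵥ v) ^ 2 :=
              mul_nonneg (one_div_nonneg.mpr hσ_pos.le) (sq_nonneg _)
            linarith
        simpa using hgoal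
      refine ⟨hpd', fun v => ?_⟩
      have h9 : 0 ≤ (1 / r) * (S ⬝ᵥ (B n) *ᵥ v) ^ 2 :=
        mul_nonneg (one_div_nonneg.mpr hr.le) (sq_nonneg _)
      have h10 : (Z ⬝ᵥ v) ^ 2 ≤ (Z ⬝ᵥ Z) * (v ⬝ᵥ v) := dp_cs Z v
      have h11 : (1 / (S ⬝ᵥ Z)) * (Z ⬝ᵥ v) ^ 2 ≤ κ * (v ⬝ᵥ v) := by
        have hvv : 0 ≤ v ⬝ᵥ v := by
          rcases eq_or_ne v 0 with rfl | hv0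
          · simp
          · exact le_of_lt (dp_self_pos hv0)
        rw [div_mul_eq_mul_div, div_le_iff₀ hσ_pos, one_mul]
        calc (Z ⬝ᵥ v) ^ 2 ≤ (Z ⬝ᵥ Z) * (v ⬝ᵥ v) := h10
          _ ≤ (κ * (S ⬝ᵥ Z)) * (v ⬝ᵥ v) := by
              apply mul_le_mul_of_nonneg_right hZZ hvv
          _ = κ * (v ⬝ᵥ v) * (S ⬝ᵥ Z) := by ring
      have h12 := hquad v
      have hexp : (1 + ((n : ℝ) + 1) * κ) * (v ⬝ᵥ v)
          = (1 + (n : ℝ) * κ) * (v ⬝ᵥ v) + κ * (v ⬝ᵥ v) := by ring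
      rw [hq v]
      push_cast
      linarith [h9, h11, h12, hexp]
  -- conclude
  intro j hj
  obtain ⟨hpd, hquad⟩ := key j hj
  refine ⟨hpd, ?_⟩
  have hK : (0 : ℝ) ≤ 1 + (j : ℝ) * κ := by
    have : (0 : ℝ) ≤ (j : ℝ) * κ := mul_nonneg (Nat.cast_nonneg j) hκ.le
    linarith
  apply Real.sSup_le _ hK
  rintro x ⟨v, hv, hx⟩
  have hvv : 0 < v ⬝ᵥ v := dp_self_pos hv
  have h1 : v ⬝ᵥ (B j) *ᵥ v = x * (v ⬝ᵥ v) := by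
    rw [hx, dotProduct_smul, smul_eq_mul]
  have h2 := hquad v
  rw [h1] at h2
  have := le_of_mul_le_mul_right h2 hvv
  exact this
end

section
/- Let m ≥ 2 and let s, y ∈ ℝ^m with sᵀy > 0. Define N = I − (y sᵀ)/(sᵀy). Then λ_max(Nᵀ N) = ‖y‖² ‖s‖² / (sᵀy)². -/
open Matrix

lemma auxMulVec {m : ℕ} (c : ℝ) (s y v : Fin m → ℝ) :
    (1 - (1/c) • vecMulVec y s) *ᵥ v = v - ((s ⬝ᵥ v)/c) • y := by
  have h : vecMulVec y s *ᵥ v = (s ⬝ᵥ v) • y := by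
    funext i
    simp only [mulVec, vecMulVec_apply, dotProduct, Pi.smul_apply, smul_eq_mul,
      Finset.sum_mul]
    exact Finset.sum_congr rfl fun j _ => by ring
  rw [sub_mulVec, smul_mulVec, one_mulVec, h, smul_smul]
  ring_nf

lemma auxTrans {m : ℕ} (c : ℝ) (s y : Fin m → ℝ) :
    (1 - (1/c) • vecMulVec y s)ᵀ = 1 - (1/c) • vecMulVec s y := by
  rw [transpose_sub, transpose_smul, transpose_one]
  congr 1
  funext i j
  simp [vecMulVec_apply, mul_comm]

lemma auxCS {m : ℕ} (u w : Fin m → ℝ) : (u ⬝ᵥ w)^2 ≤ (u ⬝ᵥ u) * (w ⬝ᵥ w) := by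
  simpa [dotProduct, sq] using Finset.sum_mul_sq_le_sq_mul_sq Finset.univ u w

/-- For `N = I − y sᵀ/(sᵀy)` in dimension `m ≥ 2`, the maximum eigenvalue of `NᵀN`
is `‖y‖²‖s‖²/(sᵀy)²`. -/
theorem stmt7 {m : ℕ} (hm : 2 ≤ m) (s y : Fin m → ℝ) (hsy : 0 < s ⬝ᵥ y) :
    lamMax ((1 - (1 / (s ⬝ᵥ y)) • vecMulVec y s)ᵀ *
        (1 - (1 / (s ⬝ᵥ y)) • vecMulVec y s))
      = (y ⬝ᵥ y) * (s ⬝ᵥ s) / (s ⬝ᵥ y) ^ 2 := by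
  have hc0 : (s ⬝ᵥ y) ≠ 0 := ne_of_gt hsy
  set c := s ⬝ᵥ y with hc
  set q := y ⬝ᵥ y with hqdef
  set p := s ⬝ᵥ s with hpdef
  have hy0 : y ≠ 0 := by
    rintro rfl
    simp [hc] at hsy
  have hq1 : 0 ≤ q := Finset.sum_nonneg fun i _ => mul_self_nonneg (y i)
  have hq0 : 0 < q := lt_of_le_of_ne hq1 (fun h => hy0 (dotProduct_self_eq_zero.mp h.symm))
  have hp0 : 0 ≤ p := Finset.sum_nonneg fun i _ => mul_self_nonneg (s i)
  -- action of A on a vector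
  have hA : ∀ v : Fin m → ℝ,
      ((1 - (1/c) • vecMulVec y s)ᵀ * (1 - (1/c) • vecMulVec y s)) *ᵥ v
        = (v - ((s ⬝ᵥ v)/c) • y)
          - ((y ⬝ᵥ (v - ((s ⬝ᵥ v)/c) • y))/c) • s := by
    intro v
    rw [← mulVec_mulVec, auxMulVec, auxTrans, auxMulVec]
  set t := q * p / c ^ 2 with ht
  set S := {r : ℝ | ∃ v : Fin m → ℝ, v ≠ 0 ∧
    (((1 - (1/c) • vecMulVec y s)ᵀ * (1 - (1/c) • vecMulVec y s))).mulVec v = r • v}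
    with hS
  have hmem : t ∈ S := by
    by_cases hw : s - (c/q) • y = 0
    · -- parallel case: s = (c/q) • y, t = 1
      have hs : s = (c/q) • y := by rwa [sub_eq_zero] at hw
      have hp2 : p = (c/q) * ((c/q) * q) := by
        rw [hpdef]
        nth_rewrite 1 [hs]
        nth_rewrite 1 [hs]
        rw [smul_dotProduct, dotProduct_smul, ← hqdef]
        simp [mul_assoc]
      have ht1 : t = 1 := by
        rw [ht, hp2]
        field_simp
      obtain ⟨j, hj'⟩ := Function.ne_iff.mp hy0
      have hj : y j ≠ 0 := by simpa using hj'
      have h0m : 0 < m := by omega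
      have h1m : 1 < m := by omega
      set i0 : Fin m := ⟨0, h0m⟩ with hi0
      set i1 : Fin m := ⟨1, h1m⟩ with hi1
      have h01 : i0 ≠ i1 := by simp [hi0, hi1, Fin.ext_iff]
      set k := if j = i0 then i1 else i0 with hk
      have hkj : k ≠ j := by
        by_cases h : j = i0
        · rw [hk, if_pos h, h]; exact h01.symm
        · rw [hk, if_neg h]; exact fun hh => h hh.symm
      set w : Fin m → ℝ := y k • (Pi.single j 1 : Fin m → ℝ) - y j • (Pi.single k 1 : Fin m → ℝ) with hwdef
      have hyv : y ⬝ᵥ w = 0 := by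
        rw [hwdef, dotProduct_sub, dotProduct_smul, dotProduct_smul,
          dotProduct_single, dotProduct_single]
        simp
        ring
      have hsv : s ⬝ᵥ w = 0 := by
        rw [hs, smul_dotProduct, hyv]
        simp
      refine ⟨w, ?_, ?_⟩
      · intro h0
        have h2 := congrFun h0 k
        rw [hwdef] at h2
        simp [Pi.single_eq_of_ne hkj, Pi.single_eq_same] at h2
        exact hj h2
      · rw [hA, hsv, ht1]
        simp [hyv]
    · -- generic case: eigenvector s - (c/q) • y with eigenvalue t
      refine ⟨s - (c/q) • y, hw, ?_⟩
      rw [hA]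
      have h1 : s ⬝ᵥ (s - (c/q) • y) = p - c^2/q := by
        rw [dotProduct_sub, dotProduct_smul, ← hpdef, ← hc]
        simp
        ring
      have h2 : y ⬝ᵥ (s - (c/q) • y) = 0 := by
        rw [dotProduct_sub, dotProduct_smul, dotProduct_comm y s, ← hc, ← hqdef]
        rw [smul_eq_mul, div_mul_cancel₀ c hq0.ne', sub_self]
      rw [h1]
      have h3 : y ⬝ᵥ ((s - (c/q) • y) - ((p - c^2/q)/c) • y)
          = -(((p - c^2/q)/c) * q) := by
        rw [dotProduct_sub, h2, dotProduct_smul, ← hqdef]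
        simp
      rw [h3]
      funext i
      simp only [Pi.sub_apply, Pi.smul_apply, smul_eq_mul, ht]
      field_simp
      ring
  have hub : ∀ r ∈ S, r ≤ t := by
    rintro r ⟨v, hv, hAv⟩
    set a := s ⬝ᵥ v with ha
    set b := y ⬝ᵥ v with hb
    set V := v ⬝ᵥ v with hV
    have hV1 : 0 ≤ V := Finset.sum_nonneg fun i _ => mul_self_nonneg (v i)
    have hV0 : 0 < V := lt_of_le_of_ne hV1 (fun h => hv (dotProduct_self_eq_zero.mp h.symm))
    have h1 : r * V * c ^ 2 = V * c ^ 2 - 2 * a * b * c + a ^ 2 * q := by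
      have e1 : r * V = v ⬝ᵥ (r • v) := by rw [dotProduct_smul, smul_eq_mul, ← hV]
      rw [← hAv, hA] at e1
      have e2 : v ⬝ᵥ ((v - (a/c) • y) - ((y ⬝ᵥ (v - (a/c) • y))/c) • s)
          = V - 2*(a*b)/c + a^2*q/c^2 := by
        simp only [dotProduct_sub, dotProduct_smul, smul_eq_mul, ← ha, ← hb, ← hV]
        rw [dotProduct_comm v y, dotProduct_comm v s, ← hqdef, ← ha, ← hb]
        field_simp
        ring
      rw [e2] at e1
      rw [e1]
      field_simp
    have hCS : (q*a - c*b)^2 ≤ (q*p - c^2) * (q*V - b^2) := by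
      have h := auxCS (q • s - c • y) (q • v - b • y)
      simp only [dotProduct_sub, sub_dotProduct, dotProduct_smul, smul_dotProduct,
        smul_eq_mul] at h
      rw [dotProduct_comm y s] at h
      rw [dotProduct_comm y v] at h
      rw [dotProduct_comm v y] at h
      nlinarith [h, sq_nonneg q, mul_pos hq0 hq0]
    rw [ht, le_div_iff₀ (by positivity)]
    nlinarith [h1, hCS, hV0, hq0, hsy, mul_pos hV0 hq0,
      mul_nonneg (mul_nonneg hp0 (sq_nonneg b)) hq0.le]
  rw [lamMax, ← hS]
  exact le_antisymm (csSup_le ⟨t, hmem⟩ hub) (le_csSup ⟨t, hub⟩ hmem)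
end

section
/- Let P be a symmetric positive semidefinite real m×m matrix and let s, y ∈ ℝ^m with sᵀy > 0. Define P⁺ = (I − (y sᵀ)/(sᵀy))ᵀ P (I − (y sᵀ)/(sᵀy)) + (s sᵀ)/(sᵀy). Then λ_max(P⁺) ≤ λ_max(P) · ‖y‖² ‖s‖² / (sᵀy)² + ‖s‖²/(sᵀy). -/
open Matrix

namespace Stmt9Aux

variable {m : ℕ}

lemma dot_self_nonneg (v : Fin m → ℝ) : 0 ≤ v ⬝ᵥ v :=
  Finset.sum_nonneg fun _ _ => mul_self_nonneg _

lemma dot_self_pos {v : Fin m → ℝ} (hv : v ≠ 0) : 0 < v ⬝ᵥ v :=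
  lt_of_le_of_ne (dot_self_nonneg v)
    (fun h => hv (dotProduct_self_eq_zero.mp h.symm))

lemma cs (a b : Fin m → ℝ) : (a ⬝ᵥ b) ^ 2 ≤ (a ⬝ᵥ a) * (b ⬝ᵥ b) := by
  simpa [dotProduct, sq] using
    Finset.sum_mul_sq_le_sq_mul_sq Finset.univ a b

lemma vecMulVec_mulVec' (a b v : Fin m → ℝ) :
    (vecMulVec a b) *ᵥ v = (b ⬝ᵥ v) • a := by
  funext i
  simp only [Matrix.mulVec, Matrix.vecMulVec_apply, dotProduct,
    Pi.smul_apply, smul_eq_mul, Finset.mul_sum, Finset.sum_mul]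
  exact Finset.sum_congr rfl fun j _ => by ring

lemma gram (a b c : Fin m → ℝ) :
    0 ≤ (a ⬝ᵥ a) * ((b ⬝ᵥ b) * (c ⬝ᵥ c) - (b ⬝ᵥ c) * (b ⬝ᵥ c))
      - (a ⬝ᵥ b) * ((a ⬝ᵥ b) * (c ⬝ᵥ c) - (b ⬝ᵥ c) * (a ⬝ᵥ c))
      + (a ⬝ᵥ c) * ((a ⬝ᵥ b) * (b ⬝ᵥ c) - (b ⬝ᵥ b) * (a ⬝ᵥ c)) := by
  classical
  set A : Matrix (Fin 3) (Fin m) ℝ := Matrix.of ![a, b, c] with hA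
  have hps := Matrix.posSemidef_self_mul_conjTranspose A
  have hdet : 0 ≤ (A * Aᴴ).det := by
    rw [hps.isHermitian.det_eq_prod_eigenvalues]
    exact Finset.prod_nonneg fun i _ => by simpa using hps.eigenvalues_nonneg i
  rw [Matrix.det_fin_three] at hdet
  have e : ∀ i j : Fin 3, (A * Aᴴ) i j = (![a, b, c] i) ⬝ᵥ (![a, b, c] j) := by
    intro i j
    rw [Matrix.mul_apply]
    simp only [Matrix.conjTranspose_apply, star_trivial, hA, Matrix.of_apply]
    rfl
  simp only [e] at hdet
  simp only [Matrix.cons_val_zero, Matrix.cons_val_one, Matrix.head_cons,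
    Matrix.cons_val_two, Matrix.tail_cons] at hdet
  rw [dotProduct_comm b a, dotProduct_comm c a,
    dotProduct_comm c b] at hdet
  nlinarith [hdet]

lemma rayleigh {A : Matrix (Fin m) (Fin m) ℝ} (hA : A.IsHermitian) {M : ℝ}
    (hM : ∀ i, hA.eigenvalues i ≤ M) (x : Fin m → ℝ) :
    x ⬝ᵥ A *ᵥ x ≤ M * (x ⬝ᵥ x) := by
  classical
  set U : Matrix (Fin m) (Fin m) ℝ := (hA.eigenvectorUnitary : Matrix (Fin m) (Fin m) ℝ)
    with hUdef
  have hUT : star U = Uᵀ := by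
    rw [Matrix.star_eq_conjTranspose, Matrix.conjTranspose_eq_transpose_of_trivial]
  set u : Fin m → ℝ := Uᵀ *ᵥ x with hu
  have hx : x ᵥ* U = u := by rw [hu, Matrix.mulVec_transpose]
  have hUU : U * Uᵀ = 1 := by
    rw [← hUT]
    exact Matrix.mem_unitaryGroup_iff.mp hA.eigenvectorUnitary.2
  have huu : u ⬝ᵥ u = x ⬝ᵥ x := by
    conv_lhs => rw [hu, Matrix.dotProduct_mulVec, Matrix.vecMul_transpose,
      Matrix.mulVec_mulVec, hUU, Matrix.one_mulVec]
  have hspec := hA.spectral_theorem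
  calc x ⬝ᵥ A *ᵥ x
      = u ⬝ᵥ (Matrix.diagonal (RCLike.ofReal ∘ hA.eigenvalues)) *ᵥ u := by
        conv_lhs => rw [hspec, Unitary.conjStarAlgAut_apply, ← Matrix.mulVec_mulVec, ← Matrix.mulVec_mulVec,
          Matrix.dotProduct_mulVec, hx, hUT]
    _ ≤ M * (u ⬝ᵥ u) := by
        simp only [dotProduct, Matrix.mulVec_diagonal, Finset.mul_sum]
        apply Finset.sum_le_sum
        intro i _
        have h1 := hM i
        have h2 : (RCLike.ofReal ∘ hA.eigenvalues) i = hA.eigenvalues i := rfl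
        rw [h2]
        nlinarith [mul_self_nonneg (u i)]
    _ = M * (x ⬝ᵥ x) := by rw [huu]

lemma lamMax_rayleigh (hm : 0 < m) {A : Matrix (Fin m) (Fin m) ℝ}
    (hA : A.IsHermitian) (x : Fin m → ℝ) :
    x ⬝ᵥ A *ᵥ x ≤ lamMax A * (x ⬝ᵥ x) := by
  classical
  have hne : (Finset.univ : Finset (Fin m)).Nonempty :=
    ⟨⟨0, hm⟩, Finset.mem_univ _⟩
  set M := Finset.univ.sup' hne hA.eigenvalues with hMdef
  have hM : ∀ i, hA.eigenvalues i ≤ M := fun i => Finset.le_sup' _ (Finset.mem_univ i)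
  have hb : ∀ r ∈ {r : ℝ | ∃ v : Fin m → ℝ, v ≠ 0 ∧ A.mulVec v = r • v}, r ≤ M := by
    rintro r ⟨v, hv, hev⟩
    have hvv : 0 < v ⬝ᵥ v := dot_self_pos hv
    have h1 : v ⬝ᵥ A *ᵥ v = r * (v ⬝ᵥ v) := by
      rw [hev, dotProduct_smul, smul_eq_mul]
    have h2 := rayleigh hA hM v
    rw [h1] at h2
    exact le_of_mul_le_mul_right h2 hvv
  obtain ⟨i, _, hi⟩ := Finset.exists_mem_eq_sup' hne hA.eigenvalues
  have hvne : (⇑(hA.eigenvectorBasis i) : Fin m → ℝ) ≠ 0 := by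
    intro h
    exact hA.eigenvectorBasis.orthonormal.ne_zero i (by ext j; exact congrFun h j)
  have hmem : M ∈ {r : ℝ | ∃ v : Fin m → ℝ, v ≠ 0 ∧ A.mulVec v = r • v} :=
    ⟨⇑(hA.eigenvectorBasis i), hvne, by rw [hMdef, hi]; exact hA.mulVec_eigenvectorBasis i⟩
  have hMle : M ≤ lamMax A := le_csSup ⟨M, hb⟩ hmem
  calc x ⬝ᵥ A *ᵥ x ≤ M * (x ⬝ᵥ x) := rayleigh hA hM x
    _ ≤ lamMax A * (x ⬝ᵥ x) := mul_le_mul_of_nonneg_right hMle (dot_self_nonneg x)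

lemma lamMax_nonneg (hm : 0 < m) {A : Matrix (Fin m) (Fin m) ℝ}
    (hA : A.PosSemidef) : 0 ≤ lamMax A := by
  classical
  set i : Fin m := ⟨0, hm⟩
  have hne : (Finset.univ : Finset (Fin m)).Nonempty := ⟨i, Finset.mem_univ i⟩
  set N : ℝ := Finset.univ.sup' hne hA.1.eigenvalues with hNdef
  have h0 : 0 ≤ hA.1.eigenvalues i := hA.eigenvalues_nonneg i
  have hvne : (⇑(hA.1.eigenvectorBasis i) : Fin m → ℝ) ≠ 0 := by
    intro h
    exact hA.1.eigenvectorBasis.orthonormal.ne_zero i (by ext j; exact congrFun h j)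
  have hvv : 0 < (⇑(hA.1.eigenvectorBasis i) : Fin m → ℝ) ⬝ᵥ ⇑(hA.1.eigenvectorBasis i) :=
    dot_self_pos hvne
  have hmem : hA.1.eigenvalues i ∈
      {r : ℝ | ∃ v : Fin m → ℝ, v ≠ 0 ∧ A.mulVec v = r • v} :=
    ⟨⇑(hA.1.eigenvectorBasis i), hvne, hA.1.mulVec_eigenvectorBasis i⟩
  have hb : ∀ r ∈ {r : ℝ | ∃ v : Fin m → ℝ, v ≠ 0 ∧ A.mulVec v = r • v}, r ≤ N := by
    rintro r ⟨v, hv, hev⟩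
    have hvv' : 0 < v ⬝ᵥ v := dot_self_pos hv
    have h1 : v ⬝ᵥ A *ᵥ v = r * (v ⬝ᵥ v) := by
      rw [hev, dotProduct_smul, smul_eq_mul]
    have h2 := rayleigh hA.1 (M := N)
      (fun j => hNdef ▸ Finset.le_sup' _ (Finset.mem_univ j)) v
    rw [h1] at h2
    exact le_of_mul_le_mul_right h2 hvv'
  exact h0.trans (le_csSup ⟨N, hb⟩ hmem)

end Stmt9Aux

open Stmt9Aux in
/-- One-step recursion for the maximal eigenvalue of the inverse BFGS update. -/
theorem stmt9 {m : ℕ} (P : Matrix (Fin m) (Fin m) ℝ) (hP : P.PosSemidef)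
    (s y : Fin m → ℝ) (hsy : 0 < s ⬝ᵥ y) :
    lamMax ((1 - (1 / (s ⬝ᵥ y)) • vecMulVec y s)ᵀ * P *
          (1 - (1 / (s ⬝ᵥ y)) • vecMulVec y s)
        + (1 / (s ⬝ᵥ y)) • vecMulVec s s)
      ≤ lamMax P * ((y ⬝ᵥ y) * (s ⬝ᵥ s) / (s ⬝ᵥ y) ^ 2) + (s ⬝ᵥ s) / (s ⬝ᵥ y) := by
  classical
  have hm : 0 < m := by
    rcases Nat.eq_zero_or_pos m with h | h
    · subst h; simp [dotProduct] at hsy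
    · exact h
  set σ := s ⬝ᵥ y with hσdef
  have hσ : 0 < σ := hsy
  set S := s ⬝ᵥ s with hSdef
  set Y := y ⬝ᵥ y with hYdef
  have hS : 0 ≤ S := dot_self_nonneg s
  have hY : 0 ≤ Y := dot_self_nonneg y
  have hlam : 0 ≤ lamMax P := lamMax_nonneg hm hP
  have ray := lamMax_rayleigh hm hP.1
  set Q : Matrix (Fin m) (Fin m) ℝ := 1 - (1 / σ) • vecMulVec y s with hQdef
  have hRHS : 0 ≤ lamMax P * (Y * S / σ ^ 2) + S / σ :=
    add_nonneg (mul_nonneg hlam (div_nonneg (mul_nonneg hY hS) (sq_nonneg σ)))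
      (div_nonneg hS hσ.le)
  refine Real.sSup_le ?_ hRHS
  rintro r ⟨v, hv, hev⟩
  have hvv : 0 < v ⬝ᵥ v := dot_self_pos hv
  set a := s ⬝ᵥ v with ha
  set w : Fin m → ℝ := v - (a / σ) • y with hw
  have hQv : Q *ᵥ v = w := by
    rw [hQdef, Matrix.sub_mulVec, Matrix.one_mulVec, Matrix.smul_mulVec,
      vecMulVec_mulVec', smul_smul, hw, ← ha]
    congr 1
    rw [one_div, inv_mul_eq_div]
  have key : v ⬝ᵥ ((Qᵀ * P * Q + (1 / σ) • vecMulVec s s) *ᵥ v)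
      = w ⬝ᵥ P *ᵥ w + a ^ 2 / σ := by
    rw [Matrix.add_mulVec, dotProduct_add]
    congr 1
    · rw [← Matrix.mulVec_mulVec, ← Matrix.mulVec_mulVec, hQv,
        Matrix.dotProduct_mulVec, Matrix.vecMul_transpose, hQv]
    · rw [Matrix.smul_mulVec, vecMulVec_mulVec', dotProduct_smul,
        dotProduct_smul, smul_eq_mul, smul_eq_mul, ← ha,
        dotProduct_comm v s, ← ha]
      ring
  have hr : r * (v ⬝ᵥ v) = w ⬝ᵥ P *ᵥ w + a ^ 2 / σ := by
    rw [← key, hev, dotProduct_smul, smul_eq_mul]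
  have hww : w ⬝ᵥ w = v ⬝ᵥ v - 2 * (a / σ) * (y ⬝ᵥ v) + (a / σ) ^ 2 * Y := by
    rw [hw]
    simp only [sub_dotProduct, dotProduct_sub, smul_dotProduct,
      dotProduct_smul, smul_eq_mul, dotProduct_comm y v, ← hYdef]
    ring
  have hww2 : σ ^ 2 * (w ⬝ᵥ w)
      = σ ^ 2 * (v ⬝ᵥ v) - 2 * σ * a * (y ⬝ᵥ v) + a ^ 2 * Y := by
    rw [hww]; field_simp
  have hg := gram s v y
  rw [← hSdef, ← ha, ← hσdef, dotProduct_comm v y, ← hYdef] at hg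
  have h3 : σ ^ 2 * (w ⬝ᵥ w) ≤ Y * S * (v ⬝ᵥ v) := by
    nlinarith [hg, sq_nonneg (y ⬝ᵥ v), mul_nonneg hS (sq_nonneg (y ⬝ᵥ v))]
  have hcs : a ^ 2 ≤ S * (v ⬝ᵥ v) := by
    rw [ha, hSdef]; exact cs s v
  have h2 : w ⬝ᵥ P *ᵥ w ≤ lamMax P * (w ⬝ᵥ w) := ray w
  have hpos : (0 : ℝ) < (v ⬝ᵥ v) * σ ^ 2 := mul_pos hvv (pow_pos hσ 2)
  rw [← mul_le_mul_iff_of_pos_right hpos]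
  have hexp : (lamMax P * (Y * S / σ ^ 2) + S / σ) * ((v ⬝ᵥ v) * σ ^ 2)
      = lamMax P * (Y * S * (v ⬝ᵥ v)) + S * σ * (v ⬝ᵥ v) := by
    field_simp
  rw [hexp]
  have hlhs : r * ((v ⬝ᵥ v) * σ ^ 2) = (w ⬝ᵥ P *ᵥ w) * σ ^ 2 + a ^ 2 * σ := by
    have : r * (v ⬝ᵥ v) * σ ^ 2 = (w ⬝ᵥ P *ᵥ w + a ^ 2 / σ) * σ ^ 2 := by rw [hr]
    rw [← mul_assoc]
    rw [this]
    field_simp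
  rw [hlhs]
  nlinarith [h2, h3, hcs, hlam, hσ, mul_le_mul_of_nonneg_left h3 hlam,
    mul_le_mul_of_nonneg_right h2 (sq_nonneg σ)]
end

section
/- Let g, y, d_prev ∈ ℝ^n, let α > 0, set s = α d_prev, and assume sᵀy > 0. Let 0 ≤ ξ₃ < 1 and assume |(gᵀy)(gᵀs)| ≤ ξ₃ (sᵀy) ‖g‖². Define the Hestenes–Stiefel direction d = −g + ((gᵀy)/(d_prevᵀy)) d_prev. Then gᵀd ≤ −(1 − ξ₃)‖g‖². -/
open scoped RealInnerProductSpace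

/-- Sufficient descent of the Hestenes–Stiefel direction under condition (2.10)
(part of Lemma 3). -/
theorem stmt14 {n : ℕ} (g y dprev s : EuclideanSpace ℝ (Fin n)) (α : ℝ)
    (hα : 0 < α) (hs : s = α • dprev) (hsy : 0 < ⟪s, y⟫)
    (ξ₃ : ℝ) (hξ₃0 : 0 ≤ ξ₃) (hξ₃1 : ξ₃ < 1)
    (hcond : |⟪g, y⟫ * ⟪g, s⟫| ≤ ξ₃ * ⟪s, y⟫ * ‖g‖ ^ 2) :
    ⟪g, -g + (⟪g, y⟫ / ⟪dprev, y⟫) • dprev⟫ ≤ -(1 - ξ₃) * ‖g‖ ^ 2 := by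
  have hsy' : ⟪s, y⟫ = α * ⟪dprev, y⟫ := by rw [hs, real_inner_smul_left]
  have hdy : 0 < ⟪dprev, y⟫ := by
    by_contra h
    push_neg at h
    nlinarith [hsy, hsy']
  have hgs : ⟪g, s⟫ = α * ⟪g, dprev⟫ := by rw [hs, real_inner_smul_right]
  have key : ⟪g, y⟫ * ⟪g, dprev⟫ / ⟪dprev, y⟫ ≤ ξ₃ * ‖g‖ ^ 2 := by
    rw [div_le_iff₀ hdy]
    have h1 : ⟪g, y⟫ * ⟪g, s⟫ ≤ ξ₃ * ⟪s, y⟫ * ‖g‖ ^ 2 :=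
      (le_abs_self _).trans hcond
    rw [hgs, hsy'] at h1
    nlinarith
  have expand : ⟪g, -g + (⟪g, y⟫ / ⟪dprev, y⟫) • dprev⟫ =
      -‖g‖ ^ 2 + ⟪g, y⟫ * ⟪g, dprev⟫ / ⟪dprev, y⟫ := by
    rw [inner_add_right, inner_neg_right, real_inner_smul_right, real_inner_self_eq_norm_sq]
    ring
  rw [expand]
  nlinarith [sq_nonneg ‖g‖]
end

section
/- Let g, y, d_prev ∈ ℝ^n, let α > 0, set s = α d_prev, and assume s ≠ 0. Let ξ₁ > 0 and L > 0 and assume sᵀy ≥ ξ₁ ‖s‖² and ‖y‖ ≤ L ‖s‖. Define the Hestenes–Stiefel direction d = −g + ((gᵀy)/(d_prevᵀy)) d_prev. Then ‖d‖ ≤ (1 + L/ξ₁) ‖g‖. -/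
open scoped RealInnerProductSpace

/-- Linear growth of the Hestenes–Stiefel direction (part of Lemma 4). -/
theorem stmt15 {n : ℕ} (g y dprev s : EuclideanSpace ℝ (Fin n)) (α : ℝ)
    (hα : 0 < α) (hs : s = α • dprev) (hs0 : s ≠ 0)
    (ξ₁ L : ℝ) (hξ₁ : 0 < ξ₁) (hL : 0 < L)
    (hcurv : ⟪s, y⟫ ≥ ξ₁ * ‖s‖ ^ 2) (hLip : ‖y‖ ≤ L * ‖s‖) :
    ‖-g + (⟪g, y⟫ / ⟪dprev, y⟫) • dprev‖ ≤ (1 + L / ξ₁) * ‖g‖ := by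
  have hsnorm : 0 < ‖s‖ := norm_pos_iff.mpr hs0
  have hsy : ⟪s, y⟫ ≥ ξ₁ * ‖s‖ ^ 2 := hcurv
  have hsypos : 0 < ⟪s, y⟫ := lt_of_lt_of_le (by positivity) hsy
  have hsy' : ⟪s, y⟫ = α * ⟪dprev, y⟫ := by
    rw [hs, real_inner_smul_left]
  have hdy : ⟪dprev, y⟫ = ⟪s, y⟫ / α := by
    field_simp [hsy']; rw [hsy']; ring
  have hdypos : 0 < ⟪dprev, y⟫ := by
    rw [hdy]; positivity
  have hns : ‖s‖ = α * ‖dprev‖ := by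
    rw [hs, norm_smul, Real.norm_eq_abs, abs_of_pos hα]
  have hgy : |⟪g, y⟫| ≤ ‖g‖ * (L * ‖s‖) :=
    (abs_real_inner_le_norm g y).trans (by nlinarith [norm_nonneg g])
  have key : |⟪g, y⟫ / ⟪dprev, y⟫| * ‖dprev‖ ≤ L / ξ₁ * ‖g‖ := by
    rw [abs_div, abs_of_pos hdypos, div_mul_eq_mul_div, div_le_iff₀ hdypos, hdy,
      show ‖dprev‖ = ‖s‖ / α by field_simp [hns]; rw [hns]; ring]
    have key2 : |⟪g, y⟫| * ‖s‖ ≤ L / ξ₁ * ‖g‖ * ⟪s, y⟫ := by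
      have h1 : ξ₁ * ‖s‖ ^ 2 ≤ ⟪s, y⟫ := hsy
      have hA : |⟪g, y⟫| * ‖s‖ ≤ ‖g‖ * (L * ‖s‖) * ‖s‖ :=
        mul_le_mul_of_nonneg_right hgy (le_of_lt hsnorm)
      have hB : L / ξ₁ * ‖g‖ * (ξ₁ * ‖s‖ ^ 2) ≤ L / ξ₁ * ‖g‖ * ⟪s, y⟫ :=
        mul_le_mul_of_nonneg_left h1 (by positivity)
      have hC : L / ξ₁ * ‖g‖ * (ξ₁ * ‖s‖ ^ 2) = ‖g‖ * (L * ‖s‖) * ‖s‖ := by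
        field_simp
      linarith
    calc |⟪g, y⟫| * (‖s‖ / α) = |⟪g, y⟫| * ‖s‖ / α := by ring
      _ ≤ L / ξ₁ * ‖g‖ * ⟪s, y⟫ / α := by
          exact div_le_div_of_nonneg_right key2 hα.le
      _ = L / ξ₁ * ‖g‖ * (⟪s, y⟫ / α) := by ring
  calc ‖-g + (⟪g, y⟫ / ⟪dprev, y⟫) • dprev‖
      ≤ ‖-g‖ + ‖(⟪g, y⟫ / ⟪dprev, y⟫) • dprev‖ := norm_add_le _ _
    _ = ‖g‖ + |⟪g, y⟫ / ⟪dprev, y⟫| * ‖dprev‖ := by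
        rw [norm_neg, norm_smul, Real.norm_eq_abs]
    _ ≤ ‖g‖ + L / ξ₁ * ‖g‖ := by linarith
    _ = (1 + L / ξ₁) * ‖g‖ := by ring
end

section
/- Let g, s, y ∈ ℝ^n with g ≠ 0, y ≠ 0, and sᵀy > 0. Set ρ = (3/2)(‖y‖²/(sᵀy))‖g‖² and Δ = ρ (sᵀy) − (gᵀy)², and define d = ū g + v̄ s with ū = ((gᵀy)(gᵀs) − (sᵀy)‖g‖²)/Δ and v̄ = ((gᵀy)‖g‖² − ρ (gᵀs))/Δ. Then gᵀd ≤ −‖g‖⁴/ρ = −(2/3)((sᵀy)/‖y‖²)‖g‖². In particular, if ‖y‖²/(sᵀy) ≤ ξ₂ for some ξ₂ > 0, then gᵀd ≤ −(2/(3ξ₂))‖g‖². -/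
open scoped RealInnerProductSpace

/-- Sufficient descent of the SMCG direction in case (ii) (part of Lemma 3):
`gᵀd ≤ −‖g‖⁴/ρ = −(2/3)((sᵀy)/‖y‖²)‖g‖²`, and in particular
`gᵀd ≤ −(2/(3ξ₂))‖g‖²` whenever `‖y‖²/(sᵀy) ≤ ξ₂`. -/
theorem stmt18 {n : ℕ} (g s y : EuclideanSpace ℝ (Fin n)) (hg : g ≠ 0) (hy : y ≠ 0)
    (hsy : 0 < ⟪s, y⟫) (ρ Δ : ℝ)
    (hρ : ρ = (3 / 2) * (‖y‖ ^ 2 / ⟪s, y⟫) * ‖g‖ ^ 2)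
    (hΔ : Δ = ρ * ⟪s, y⟫ - ⟪g, y⟫ ^ 2)
    (d : EuclideanSpace ℝ (Fin n))
    (hd : d = ((⟪g, y⟫ * ⟪g, s⟫ - ⟪s, y⟫ * ‖g‖ ^ 2) / Δ) • g
      + ((⟪g, y⟫ * ‖g‖ ^ 2 - ρ * ⟪g, s⟫) / Δ) • s) :
    ⟪g, d⟫ ≤ -(‖g‖ ^ 4 / ρ) ∧
      -(‖g‖ ^ 4 / ρ) = -((2 / 3) * (⟪s, y⟫ / ‖y‖ ^ 2) * ‖g‖ ^ 2) ∧
      ∀ ξ₂ : ℝ, 0 < ξ₂ → ‖y‖ ^ 2 / ⟪s, y⟫ ≤ ξ₂ →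
        ⟪g, d⟫ ≤ -(2 / (3 * ξ₂)) * ‖g‖ ^ 2 := by
  have hG : 0 < ‖g‖ ^ 2 := pow_pos (norm_pos_iff.2 hg) 2
  have hY : 0 < ‖y‖ ^ 2 := pow_pos (norm_pos_iff.2 hy) 2
  set a : ℝ := ⟪g, y⟫ with ha
  set b : ℝ := ⟪g, s⟫ with hb
  set c : ℝ := ⟪s, y⟫ with hc
  have hρpos : 0 < ρ := by
    rw [hρ]; positivity
  have hcs : a ^ 2 ≤ ‖g‖ ^ 2 * ‖y‖ ^ 2 := by
    have h := abs_real_inner_le_norm g y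
    nlinarith [abs_nonneg ⟪g, y⟫, sq_abs ⟪g, y⟫]
  have hρsy : ρ * c = (3 / 2) * ‖y‖ ^ 2 * ‖g‖ ^ 2 := by
    rw [hρ]; field_simp
  have hΔpos : 0 < Δ := by rw [hΔ, hρsy]; nlinarith
  have hgd : ⟪g, d⟫ = ((a * b - c * ‖g‖ ^ 2) * ‖g‖ ^ 2
      + (a * ‖g‖ ^ 2 - ρ * b) * b) / Δ := by
    rw [hd, inner_add_right, real_inner_smul_right, real_inner_smul_right,
      real_inner_self_eq_norm_sq]
    ring
  have hGρ : ‖g‖ ^ 4 / ρ * ρ = ‖g‖ ^ 4 := div_mul_cancel₀ _ hρpos.ne'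
  have h1 : ⟪g, d⟫ ≤ -(‖g‖ ^ 4 / ρ) := by
    rw [hgd, div_le_iff₀ hΔpos, ← mul_le_mul_iff_right₀ hρpos]
    have hr : ρ * (-(‖g‖ ^ 4 / ρ) * Δ) = -(‖g‖ ^ 4 * Δ) := by
      field_simp
    rw [hr, hΔ]
    nlinarith [sq_nonneg (‖g‖ ^ 2 * a - ρ * b)]
  have h2 : -(‖g‖ ^ 4 / ρ) = -((2 / 3) * (c / ‖y‖ ^ 2) * ‖g‖ ^ 2) := by
    rw [hρ]; field_simp
  refine ⟨h1, h2, fun ξ₂ hξ hbound => ?_⟩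
  have hfrac : 1 / ξ₂ ≤ c / ‖y‖ ^ 2 := by
    rw [div_le_div_iff₀ hξ hY]
    nlinarith [(div_le_iff₀ hsy).1 hbound]
  have key : (2 / (3 * ξ₂)) * ‖g‖ ^ 2 ≤ (2 / 3) * (c / ‖y‖ ^ 2) * ‖g‖ ^ 2 := by
    calc (2 / (3 * ξ₂)) * ‖g‖ ^ 2 = (2/3) * ‖g‖ ^ 2 * (1 / ξ₂) := by field_simp
      _ ≤ (2/3) * ‖g‖ ^ 2 * (c / ‖y‖ ^ 2) :=
          mul_le_mul_of_nonneg_left hfrac (by positivity)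
      _ = (2 / 3) * (c / ‖y‖ ^ 2) * ‖g‖ ^ 2 := by ring
  rw [h2] at h1
  linarith [key, h1]
end
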